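/- Weak incidence property: let x₁,…,xₙ ∈ ℝ^d with n ≥ d ≥ 1, let ν be a norm on ℝ^d, and suppose the affine hull of {x₁,…,xₙ} has dimension at least d − 1. Then there exists (β*, α*) with β* ≠ 0 minimizing the median objective Σᵢ₌₁ⁿ |βᵀxᵢ + α| / ν(β) over all (β, α) ∈ ℝ^d × ℝ with β ≠ 0, such that the hyperplane H(β*,α*) passes through d affinely independent data points: there are indices i₁,…,i_d with β*ᵀx_{i_k} + α* = 0 for k = 1,…,d and x_{i₁},…,x_{i_d} affinely independent. -/

import Mathlib

set_option synthInstance.maxHeartbeats 400000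
set_option maxHeartbeats 1000000

open Finset Module Submodule

namespace Stmt16

variable {n d : ℕ}

/-- Affine evaluation of the pair (β, α) at point `x i`. -/
def ev (x : Fin n → Fin d → ℝ) (i : Fin n) : ((Fin d → ℝ) × ℝ) →ₗ[ℝ] ℝ where
  toFun p := (∑ ℓ, p.1 ℓ * x i ℓ) + p.2
  map_add' p q := by
    simp only [Prod.fst_add, Prod.snd_add, Pi.add_apply, add_mul, Finset.sum_add_distrib]
    ring
  map_smul' c p := by
    simp only [Prod.smul_fst, Prod.smul_snd, Pi.smul_apply, smul_eq_mul, RingHom.id_apply,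
      Finset.mul_sum]
    ring_nf
    congr 1
    rw [Finset.mul_sum]
    exact Finset.sum_congr rfl fun ℓ _ => by ring

lemma ev_apply (x : Fin n → Fin d → ℝ) (i : Fin n) (p : (Fin d → ℝ) × ℝ) :
    ev x i p = (∑ ℓ, p.1 ℓ * x i ℓ) + p.2 := rfl

/-- The symmetric pairing. -/
lemma ev_line (x : Fin n → Fin d → ℝ) (i : Fin n) (p q : (Fin d → ℝ) × ℝ) (t : ℝ) :
    ev x i (p + t • q) = ev x i p + t * ev x i q := by
  rw [map_add, map_smul, smul_eq_mul]

/-- Objective numerator. -/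
def Af (x : Fin n → Fin d → ℝ) (p : (Fin d → ℝ) × ℝ) : ℝ := ∑ i, |ev x i p|

lemma Af_nonneg (x : Fin n → Fin d → ℝ) (p : (Fin d → ℝ) × ℝ) : 0 ≤ Af x p :=
  Finset.sum_nonneg fun _ _ => abs_nonneg _

lemma Af_smul (x : Fin n → Fin d → ℝ) (p : (Fin d → ℝ) × ℝ) {c : ℝ} (hc : 0 ≤ c) :
    Af x (c • p) = c * Af x p := by
  unfold Af
  rw [Finset.mul_sum]
  refine Finset.sum_congr rfl fun i _ => ?_
  rw [map_smul, smul_eq_mul, abs_mul, abs_of_nonneg hc]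

lemma Af_continuous (x : Fin n → Fin d → ℝ) : Continuous (Af x) :=
  continuous_finset_sum _ fun i _ => ((ev x i).continuous_of_finiteDimensional).abs



variable {d : ℕ}

lemma sem_sum_le (ν : Seminorm ℝ (Fin d → ℝ)) {ι : Type*} (s : Finset ι)
    (g : ι → Fin d → ℝ) : ν (∑ i ∈ s, g i) ≤ ∑ i ∈ s, ν (g i) := by
  classical
  induction s using Finset.induction with
  | empty => simp
  | insert _ _ h ih =>
    rw [Finset.sum_insert h, Finset.sum_insert h]
    exact le_trans (map_add_le_add ν _ _) (by linarith)

def sgl (d : ℕ) (ℓ : Fin d) : Fin d → ℝ := Pi.single ℓ 1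

lemma sem_bound (ν : Seminorm ℝ (Fin d → ℝ)) :
    ∀ β : Fin d → ℝ, ν β ≤ (∑ ℓ : Fin d, ν (sgl d ℓ)) * ‖β‖ := by
  intro β
  have h1 : β = ∑ ℓ : Fin d, (β ℓ) • sgl d ℓ := by
    funext j
    rw [Finset.sum_apply]
    simp [sgl, Pi.single_apply, mul_comm]
  calc ν β ≤ ∑ ℓ : Fin d, ν ((β ℓ) • sgl d ℓ) := by
        conv_lhs => rw [h1]
        exact sem_sum_le ν _ _
    _ ≤ ∑ ℓ : Fin d, ν (sgl d ℓ) * ‖β‖ := by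
        refine Finset.sum_le_sum fun ℓ _ => ?_
        rw [map_smul_eq_mul]
        rw [mul_comm (ν _)]
        exact mul_le_mul_of_nonneg_right (by simpa [sgl] using norm_le_pi_norm β ℓ)
          (apply_nonneg ν _)
    _ = _ := by rw [← Finset.sum_mul]

lemma sem_continuous (ν : Seminorm ℝ (Fin d → ℝ)) : Continuous ν := by
  set C : ℝ := ∑ ℓ : Fin d, ν (sgl d ℓ) with hC
  have hC0 : 0 ≤ C := Finset.sum_nonneg fun _ _ => apply_nonneg ν _
  have key : ∀ a b : Fin d → ℝ, |ν a - ν b| ≤ C * ‖a - b‖ := by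
    intro a b
    have t1 : ν a ≤ ν b + ν (a - b) := by
      have := map_add_le_add ν b (a - b); simpa using this
    have t2 : ν b ≤ ν a + ν (a - b) := by
      have := map_add_le_add ν a (b - a)
      have hnb : ν (b - a) = ν (a - b) := by
        rw [← neg_sub a b, map_neg_eq_map ν]
      simp only [add_sub_cancel] at this
      linarith [this, hnb.symm.le]
    have := sem_bound ν (a - b)
    rw [abs_sub_le_iff]
    constructor <;> linarith
  rw [Metric.continuous_iff]
  intro b ε hε
  by_cases hC' : C = 0
  · exact ⟨1, one_pos, fun a _ => by
      have := key a b
      rw [hC'] at this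
      simp only [Real.dist_eq, zero_mul] at *
      linarith [abs_nonneg (ν a - ν b), hε]⟩
  · have hCpos : 0 < C := lt_of_le_of_ne hC0 (Ne.symm hC')
    refine ⟨ε / C, div_pos hε hCpos, fun a ha => ?_⟩
    have h2 := key a b
    rw [Real.dist_eq]
    calc |ν a - ν b| ≤ C * ‖a - b‖ := h2
      _ < C * (ε / C) := by
          refine mul_lt_mul_of_pos_left ?_ hCpos
          rwa [← dist_eq_norm]
      _ = ε := by field_simp

lemma sem_lower (hd : 1 ≤ d) (ν : Seminorm ℝ (Fin d → ℝ))
    (hν : ∀ β : Fin d → ℝ, β ≠ 0 → 0 < ν β) :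
    ∃ c : ℝ, 0 < c ∧ ∀ β : Fin d → ℝ, c * ‖β‖ ≤ ν β := by
  haveI : Nonempty (Fin d) := ⟨⟨0, hd⟩⟩
  have hsc : IsCompact (Metric.sphere (0 : Fin d → ℝ) 1) := isCompact_sphere _ _
  have hsne : (Metric.sphere (0 : Fin d → ℝ) 1).Nonempty :=
    NormedSpace.sphere_nonempty.mpr zero_le_one
  obtain ⟨β₂, hβ₂mem, hβ₂min⟩ :=
    hsc.exists_isMinOn hsne ((sem_continuous ν).continuousOn)
  have hβ₂norm : ‖β₂‖ = 1 := by simpa using hβ₂mem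
  have hβ₂ne : β₂ ≠ 0 := by
    intro h; rw [h] at hβ₂norm; simp at hβ₂norm
  refine ⟨ν β₂, hν β₂ hβ₂ne, fun β => ?_⟩
  by_cases hβ : β = 0
  · simp [hβ]
  · have hnβ : 0 < ‖β‖ := norm_pos_iff.mpr hβ
    have hmem : ‖β‖⁻¹ • β ∈ Metric.sphere (0 : Fin d → ℝ) 1 := by
      simp [norm_smul, abs_of_pos (inv_pos.mpr hnβ), inv_mul_cancel₀ (ne_of_gt hnβ)]
    have hmin := hβ₂min hmem
    simp only [Set.mem_setOf_eq] at hmin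
    have h3 : ν (‖β‖⁻¹ • β) = ‖β‖⁻¹ * ν β := by
      rw [map_smul_eq_mul]; congr 1; simp [abs_of_pos (inv_pos.mpr hnβ)]
    rw [h3] at hmin
    calc ν β₂ * ‖β‖ ≤ (‖β‖⁻¹ * ν β) * ‖β‖ := by
          exact mul_le_mul_of_nonneg_right hmin (le_of_lt hnβ)
      _ = ν β := by field_simp


variable {n d : ℕ}

lemma exists_min (hd : 1 ≤ d) (hn : 1 ≤ n) (x : Fin n → Fin d → ℝ)
    (ν : Seminorm ℝ (Fin d → ℝ)) (hν : ∀ β : Fin d → ℝ, β ≠ 0 → 0 < ν β) :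
    ∃ (m : ℝ) (p : (Fin d → ℝ) × ℝ), 0 ≤ m ∧ p.1 ≠ 0 ∧ Af x p = m * ν p.1 ∧
      ∀ q : (Fin d → ℝ) × ℝ, q.1 ≠ 0 → m * ν q.1 ≤ Af x q := by
  haveI : Nonempty (Fin d) := ⟨⟨0, hd⟩⟩
  obtain ⟨c, hc, hlow⟩ := sem_lower hd ν hν
  set C : ℝ := c⁻¹ * (1 + ∑ i : Fin n, ∑ ℓ : Fin d, |x i ℓ|) with hCdef
  have hsum0 : 0 ≤ ∑ i : Fin n, ∑ ℓ : Fin d, |x i ℓ| :=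
    Finset.sum_nonneg fun _ _ => Finset.sum_nonneg fun _ _ => abs_nonneg _
  have hC : 0 < C := mul_pos (inv_pos.mpr hc) (by linarith)
  -- any β on the ν-sphere pairs boundedly with the data
  have hpair : ∀ β : Fin d → ℝ, ν β = 1 → ∀ i : Fin n, |∑ ℓ, β ℓ * x i ℓ| ≤ C := by
    intro β hβ i
    have hβn : ‖β‖ ≤ c⁻¹ := by
      have := hlow β
      rw [hβ] at this
      rw [← mul_le_mul_iff_right₀ hc, mul_inv_cancel₀ (ne_of_gt hc)]
      exact this
    calc |∑ ℓ, β ℓ * x i ℓ| ≤ ∑ ℓ, |β ℓ * x i ℓ| := Finset.abs_sum_le_sum_abs _ _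
      _ ≤ ∑ ℓ, c⁻¹ * |x i ℓ| := by
          refine Finset.sum_le_sum fun ℓ _ => ?_
          rw [abs_mul]
          refine mul_le_mul_of_nonneg_right ?_ (abs_nonneg _)
          exact le_trans (norm_le_pi_norm β ℓ) hβn
      _ = c⁻¹ * ∑ ℓ, |x i ℓ| := by rw [Finset.mul_sum]
      _ ≤ C := by
          rw [hCdef]
          refine mul_le_mul_of_nonneg_left ?_ (le_of_lt (inv_pos.mpr hc))
          have : ∑ ℓ, |x i ℓ| ≤ ∑ j : Fin n, ∑ ℓ, |x j ℓ| :=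
            Finset.single_le_sum (f := fun j => ∑ ℓ, |x j ℓ|)
              (fun _ _ => Finset.sum_nonneg fun _ _ => abs_nonneg _) (Finset.mem_univ i)
          linarith
  -- the compact constraint set
  set K : Set ((Fin d → ℝ) × ℝ) := {β | ν β = 1} ×ˢ Set.Icc (-(2*C)) (2*C) with hKdef
  have hKc : IsCompact K := by
    refine IsCompact.prod ?_ isCompact_Icc
    have hclosed : IsClosed {β : Fin d → ℝ | ν β = 1} :=
      isClosed_eq (sem_continuous ν) continuous_const
    have hbdd : {β : Fin d → ℝ | ν β = 1} ⊆ Metric.closedBall 0 c⁻¹ := by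
      intro β hβ
      simp only [Set.mem_setOf_eq] at hβ
      simp only [Metric.mem_closedBall, dist_zero_right]
      have := hlow β
      rw [hβ] at this
      rw [← mul_le_mul_iff_right₀ hc, mul_inv_cancel₀ (ne_of_gt hc)]
      exact this
    exact (isCompact_closedBall _ _).of_isClosed_subset hclosed hbdd
  -- nonempty
  have hβ₀ : ∀ _u : Unit, (fun _ : Fin d => (1:ℝ)) ≠ 0 := fun _u => by
    intro h
    have := congrFun h ⟨0, hd⟩
    norm_num at this
  set one : Fin d → ℝ := fun _ => 1 with honedef
  set β₁ : Fin d → ℝ := (ν one)⁻¹ • one with hβ₁def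
  have hνβ₀ : 0 < ν one := hν _ (hβ₀ ())
  have hβ₁ : ν β₁ = 1 := by
    rw [hβ₁def, map_smul_eq_mul, Real.norm_eq_abs, abs_of_pos (inv_pos.mpr hνβ₀),
      inv_mul_cancel₀ (ne_of_gt hνβ₀)]
  have hp₀mem : ((β₁, (0:ℝ)) : (Fin d → ℝ) × ℝ) ∈ K := by
    constructor
    · exact hβ₁
    · constructor <;> simp <;> linarith
  obtain ⟨p', hp'K, hp'min⟩ := hKc.exists_isMinOn ⟨_, hp₀mem⟩ (Af_continuous x).continuousOn
  have hp'1 : ν p'.1 = 1 := hp'K.1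
  refine ⟨Af x p', p', Af_nonneg x p', ?_, by rw [hp'1, mul_one], ?_⟩
  · intro h
    rw [h] at hp'1
    simp at hp'1
  · -- optimality
    intro q hq1
    have hνq : 0 < ν q.1 := hν _ hq1
    set u : (Fin d → ℝ) × ℝ := (ν q.1)⁻¹ • q with hudef
    have hu1 : ν u.1 = 1 := by
      rw [hudef]
      show ν ((ν q.1)⁻¹ • q.1) = 1
      rw [map_smul_eq_mul, Real.norm_eq_abs, abs_of_pos (inv_pos.mpr hνq),
        inv_mul_cancel₀ (ne_of_gt hνq)]
    have hAu : Af x u = (ν q.1)⁻¹ * Af x q := Af_smul x q (le_of_lt (inv_pos.mpr hνq))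
    have key : Af x p' ≤ Af x u := by
      by_cases hu2 : |u.2| ≤ 2*C
      · refine hp'min ?_
        exact ⟨hu1, abs_le.mp hu2⟩
      · push_neg at hu2
        -- each residual is large
        have hterm : ∀ i : Fin n, C ≤ |ev x i u| := by
          intro i
          have h1 : |∑ ℓ, u.1 ℓ * x i ℓ| ≤ C := hpair u.1 hu1 i
          rw [ev_apply]
          have := abs_add_le (∑ ℓ, u.1 ℓ * x i ℓ) u.2
          have h2 : |u.2| - |∑ ℓ, u.1 ℓ * x i ℓ| ≤ |(∑ ℓ, u.1 ℓ * x i ℓ) + u.2| := by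
            have := abs_sub_abs_le_abs_sub u.2 (-(∑ ℓ, u.1 ℓ * x i ℓ))
            simp only [abs_neg, sub_neg_eq_add] at this
            rw [add_comm]
            linarith
          linarith
        have hAu' : (n : ℝ) * C ≤ Af x u := by
          unfold Af
          calc (n:ℝ) * C = ∑ _i : Fin n, C := by rw [Finset.sum_const, card_univ,
                Fintype.card_fin, nsmul_eq_mul]
            _ ≤ ∑ i, |ev x i u| := Finset.sum_le_sum fun i _ => hterm i
        have hAp₀ : Af x (β₁, (0:ℝ)) ≤ (n:ℝ) * C := by
          unfold Af
          calc ∑ i, |ev x i (β₁, (0:ℝ))| ≤ ∑ _i : Fin n, C := by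
                refine Finset.sum_le_sum fun i _ => ?_
                rw [ev_apply]
                simpa using hpair β₁ hβ₁ i
            _ = (n:ℝ) * C := by rw [Finset.sum_const, card_univ, Fintype.card_fin, nsmul_eq_mul]
        have := hp'min hp₀mem
        simp only [Set.mem_setOf_eq] at this
        linarith
    rw [hAu] at key
    rw [← mul_le_mul_iff_right₀ (inv_pos.mpr hνq)]
    calc (ν q.1)⁻¹ * (Af x p' * ν q.1) = Af x p' := by field_simp
      _ ≤ (ν q.1)⁻¹ * Af x q := key


open Finset Module Submodule

variable {n d : ℕ}

/-- homogenization of a data point -/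
def vv (x : Fin n → Fin d → ℝ) (i : Fin n) : (Fin d → ℝ) × ℝ := (x i, 1)

/-- span of homogenizations of points on the hyperplane -/
def Zspan (x : Fin n → Fin d → ℝ) (p : (Fin d → ℝ) × ℝ) : Submodule ℝ ((Fin d → ℝ) × ℝ) :=
  Submodule.span ℝ (vv x '' {i | ev x i p = 0})

lemma caseA (hd : 1 ≤ d) (hn : d ≤ n) (x : Fin n → Fin d → ℝ)
    (hdim : d - 1 ≤ Module.finrank ℝ (affineSpan ℝ (Set.range x)).direction) :
    d ≤ finrank ℝ (Submodule.span ℝ (Set.range (vv x))) := by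
  have hn1 : 1 ≤ n := le_trans hd hn
  set i₀ : Fin n := ⟨0, by omega⟩ with hi₀
  set W : Submodule ℝ ((Fin d → ℝ) × ℝ) := Submodule.span ℝ (Set.range (vv x)) with hW
  -- second-coordinate functional restricted to W
  set φ : W →ₗ[ℝ] ℝ := (LinearMap.snd ℝ (Fin d → ℝ) ℝ).domRestrict W with hφ
  have hvvW : ∀ i, vv x i ∈ W := fun i => Submodule.subset_span ⟨i, rfl⟩
  have hrange : LinearMap.range φ = ⊤ := by
    rw [LinearMap.range_eq_top]
    intro c
    refine ⟨⟨c • vv x i₀, Submodule.smul_mem _ _ (hvvW i₀)⟩, ?_⟩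
    show (c • vv x i₀).2 = c
    simp [vv]
  -- the differences span a copy of the vectorSpan inside ker φ
  set K' : Submodule ℝ ((Fin d → ℝ) × ℝ) :=
    Submodule.span ℝ (Set.range fun i => vv x i - vv x i₀) with hK'
  have hK'W : K' ≤ W := by
    rw [hK', Submodule.span_le]
    rintro _ ⟨i, rfl⟩
    exact Submodule.sub_mem _ (hvvW i) (hvvW i₀)
  have hK'snd : ∀ u ∈ K', u.2 = 0 := by
    intro u hu
    have : K' ≤ LinearMap.ker (LinearMap.snd ℝ (Fin d → ℝ) ℝ) := by
      rw [hK', Submodule.span_le]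
      rintro _ ⟨i, rfl⟩
      simp [vv, LinearMap.mem_ker]
    exact this hu
  -- finrank K' = finrank of the vectorSpan
  have hKfin : finrank ℝ (vectorSpan ℝ (Set.range x)) ≤ finrank ℝ K' := by
    have hvs : vectorSpan ℝ (Set.range x) =
        Submodule.span ℝ (Set.range fun i => x i - x i₀) := by
      have := vectorSpan_range_eq_span_range_vsub_right ℝ x i₀
      simpa [vsub_eq_sub] using this
    have hmap : Submodule.map (LinearMap.inl ℝ (Fin d → ℝ) ℝ)
        (Submodule.span ℝ (Set.range fun i => x i - x i₀)) = K' := by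
      rw [Submodule.map_span, hK']
      congr 1
      rw [← Set.range_comp]
      refine congrArg _ (funext fun i => ?_)
      show ((x i - x i₀ : Fin d → ℝ), (0:ℝ)) = vv x i - vv x i₀
      simp [vv, Prod.ext_iff]
    have hinj : Function.Injective (LinearMap.inl ℝ (Fin d → ℝ) ℝ) :=
      LinearMap.inl_injective
    have := LinearEquiv.finrank_eq
      (Submodule.equivMapOfInjective (LinearMap.inl ℝ (Fin d → ℝ) ℝ) hinj
        (Submodule.span ℝ (Set.range fun i => x i - x i₀)))
    rw [hvs, this, hmap]
  -- ker φ contains (a copy of) K'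
  have hker : finrank ℝ K' ≤ finrank ℝ (LinearMap.ker φ) := by
    have hmapker : Submodule.map W.subtype (LinearMap.ker φ) = W ⊓
        LinearMap.ker (LinearMap.snd ℝ (Fin d → ℝ) ℝ) := by
      rw [hφ, LinearMap.ker_domRestrict, Submodule.map_comap_subtype]
    have h1 : K' ≤ Submodule.map W.subtype (LinearMap.ker φ) := by
      rw [hmapker]
      refine le_inf hK'W ?_
      intro u hu
      exact (LinearMap.mem_ker).mpr (hK'snd u hu)
    calc finrank ℝ K' ≤ finrank ℝ (Submodule.map W.subtype (LinearMap.ker φ)) :=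
          Submodule.finrank_mono h1
      _ = finrank ℝ (LinearMap.ker φ) :=
          (LinearEquiv.finrank_eq (Submodule.equivMapOfInjective W.subtype
            (Submodule.injective_subtype W) (LinearMap.ker φ))).symm
  have hrn := LinearMap.finrank_range_add_finrank_ker φ
  rw [hrange, finrank_top] at hrn
  have hRR : finrank ℝ ℝ = 1 := Module.finrank_self ℝ
  have hdir : d - 1 ≤ finrank ℝ (vectorSpan ℝ (Set.range x)) := by
    rwa [direction_affineSpan] at hdim
  have : finrank ℝ ℝ + finrank ℝ (LinearMap.ker φ) = finrank ℝ W := hrn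
  omega


open Finset Module Submodule

variable {n d : ℕ}

/-- The self-pairing of `(Fin d → ℝ) × ℝ` realized as a map to the dual. -/
def toDualMap (d : ℕ) : ((Fin d → ℝ) × ℝ) →ₗ[ℝ] Module.Dual ℝ ((Fin d → ℝ) × ℝ) :=
  LinearMap.mk₂ ℝ (fun q w : (Fin d → ℝ) × ℝ => (∑ ℓ, q.1 ℓ * w.1 ℓ) + q.2 * w.2)
    (fun q q' w => by
      simp only [Prod.fst_add, Prod.snd_add, Pi.add_apply, add_mul, Finset.sum_add_distrib]
      ring)
    (fun c q w => by
      simp only [Prod.smul_fst, Prod.smul_snd, Pi.smul_apply, smul_eq_mul, Finset.mul_sum]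
      ring_nf
      congr 1
      rw [Finset.mul_sum]
      exact Finset.sum_congr rfl fun ℓ _ => by ring)
    (fun q w w' => by
      simp only [Prod.fst_add, Prod.snd_add, Pi.add_apply, mul_add, Finset.sum_add_distrib]
      ring)
    (fun c q w => by
      simp only [Prod.smul_fst, Prod.smul_snd, Pi.smul_apply, smul_eq_mul, Finset.mul_sum]
      ring_nf
      congr 1
      rw [Finset.mul_sum]
      exact Finset.sum_congr rfl fun ℓ _ => by ring)

lemma toDualMap_apply (q w : (Fin d → ℝ) × ℝ) :
    toDualMap d q w = (∑ ℓ, q.1 ℓ * w.1 ℓ) + q.2 * w.2 := rfl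

lemma toDualMap_vv (x : Fin n → Fin d → ℝ) (q : (Fin d → ℝ) × ℝ) (i : Fin n) :
    toDualMap d q (vv x i) = ev x i q := by
  simp [toDualMap_apply, ev_apply, vv]

lemma toDualMap_injective : Function.Injective (toDualMap d) := by
  rw [← LinearMap.ker_eq_bot]
  rw [Submodule.eq_bot_iff]
  intro q hq
  rw [LinearMap.mem_ker] at hq
  have h1 : ∀ ℓ : Fin d, q.1 ℓ = 0 := by
    intro ℓ
    have h := LinearMap.ext_iff.mp hq ((Pi.single (M := fun _ : Fin d => ℝ) ℓ 1, 0))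
    rw [toDualMap_apply] at h
    simpa [Pi.single_apply, Finset.sum_ite_eq', mul_comm] using h
  have h2 : q.2 = 0 := by
    have h := LinearMap.ext_iff.mp hq ((0 : Fin d → ℝ), 1)
    rw [toDualMap_apply] at h
    simpa using h
  ext <;> simp [h1, h2]

lemma finrank_P : finrank ℝ ((Fin d → ℝ) × ℝ) = d + 1 := by
  rw [Module.finrank_prod, Module.finrank_pi, Module.finrank_self, Fintype.card_fin]

/-- Existence of a perturbation direction annihilating a small zero-set span. -/
lemma exists_q (x : Fin n → Fin d → ℝ) (p : (Fin d → ℝ) × ℝ) (hp : p ≠ 0)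
    (hr : finrank ℝ (Zspan x p) < d) :
    ∃ q : (Fin d → ℝ) × ℝ, (∀ i, ev x i p = 0 → ev x i q = 0) ∧
      q ∉ Submodule.span ℝ {p} := by
  classical
  set W := Zspan x p with hWdef
  -- the annihilator of W pulled back through toDualMap
  have hbij : Function.Bijective (toDualMap d) := by
    refine ⟨toDualMap_injective, ?_⟩
    have := (LinearMap.injective_iff_surjective_of_finrank_eq_finrank
      (f := toDualMap d) (Subspace.dual_finrank_eq (K := ℝ)
        (V := (Fin d → ℝ) × ℝ)).symm)
    exact this.mp toDualMap_injective
  set e : ((Fin d → ℝ) × ℝ) ≃ₗ[ℝ] Module.Dual ℝ ((Fin d → ℝ) × ℝ) :=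
    LinearEquiv.ofBijective (toDualMap d) hbij with he
  set U : Submodule ℝ ((Fin d → ℝ) × ℝ) :=
    (Submodule.dualAnnihilator W).comap e.toLinearMap with hU
  have hUrank : finrank ℝ U = finrank ℝ (Submodule.dualAnnihilator W) := by
    exact LinearEquiv.finrank_eq (LinearEquiv.ofSubmodule' e (Submodule.dualAnnihilator W))
  have hann : finrank ℝ W + finrank ℝ (Submodule.dualAnnihilator W) = d + 1 := by
    have h1 : finrank ℝ (((Fin d → ℝ) × ℝ) ⧸ W) = finrank ℝ (Submodule.dualAnnihilator W) :=
      LinearEquiv.finrank_eq (Subspace.quotEquivAnnihilator W)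
    have h2 := Submodule.finrank_quotient_add_finrank W
    rw [finrank_P] at h2
    omega
  have hU2 : 2 ≤ finrank ℝ U := by
    rw [hUrank]; omega
  have hnotle : ¬ (U ≤ Submodule.span ℝ {p}) := by
    intro hle
    have h1 : finrank ℝ U ≤ finrank ℝ (Submodule.span ℝ {p}) := Submodule.finrank_mono hle
    have h2 : finrank ℝ (Submodule.span ℝ {p}) = 1 := finrank_span_singleton hp
    omega
  obtain ⟨q, hqU, hqns⟩ := SetLike.not_le_iff_exists.mp hnotle
  refine ⟨q, ?_, hqns⟩
  intro i hi
  have hqann : e.toLinearMap q ∈ Submodule.dualAnnihilator W := hqU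
  rw [Submodule.mem_dualAnnihilator] at hqann
  have hviW : vv x i ∈ W := Submodule.subset_span ⟨i, hi, rfl⟩
  have := hqann (vv x i) hviW
  have he' : e.toLinearMap q = toDualMap d q := rfl
  rw [he'] at this
  rw [← toDualMap_vv x q i]
  exact this


open Finset Module Submodule

variable {n d : ℕ}

/-- Core perturbation step: slide the optimal hyperplane along an admissible direction
until it hits a new point, preserving optimality. -/
lemma step (x : Fin n → Fin d → ℝ) (ν : Seminorm ℝ (Fin d → ℝ))
    (m : ℝ) (hm : 0 ≤ m)
    (hopt : ∀ r : (Fin d → ℝ) × ℝ, r.1 ≠ 0 → m * ν r.1 ≤ Af x r)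
    (p q : (Fin d → ℝ) × ℝ)
    (hAp : Af x p = m * ν p.1)
    (hq0 : ∀ i, ev x i p = 0 → ev x i q = 0)
    (hline : ∀ t : ℝ, p.1 + t • q.1 ≠ 0)
    (hex : ∃ i, ev x i q ≠ 0 ∧ 0 < -(ev x i p) / ev x i q) :
    ∃ t : ℝ, ∃ i₀ : Fin n, 0 < t ∧ ev x i₀ q ≠ 0 ∧ ev x i₀ (p + t • q) = 0 ∧
      Af x (p + t • q) = m * ν ((p + t • q).1) := by
  classical
  set a : Fin n → ℝ := fun i => ev x i p with ha
  set b : Fin n → ℝ := fun i => ev x i q with hb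
  have hab : ∀ i, b i ≠ 0 → a i ≠ 0 := by
    intro i hbi hai
    exact hbi (hq0 i hai)
  -- positive crossings
  set posS : Finset (Fin n) := Finset.univ.filter (fun i => b i ≠ 0 ∧ 0 < -(a i) / b i)
    with hposS
  have hposne : posS.Nonempty := by
    obtain ⟨i, h1, h2⟩ := hex
    exact ⟨i, Finset.mem_filter.mpr ⟨Finset.mem_univ i, h1, h2⟩⟩
  set img := posS.image (fun i => -(a i) / b i) with himg
  have himgne : img.Nonempty := hposne.image _
  set ε : ℝ := img.min' himgne with hε
  have hεmem : ε ∈ img := img.min'_mem himgne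
  obtain ⟨i₀, hi₀mem, hi₀⟩ := Finset.mem_image.mp hεmem
  have hi₀' := Finset.mem_filter.mp hi₀mem
  have hbi₀ : b i₀ ≠ 0 := hi₀'.2.1
  have hεpos : 0 < ε := by rw [← hi₀]; exact hi₀'.2.2
  have hεle : ∀ i, b i ≠ 0 → 0 < -(a i) / b i → ε ≤ -(a i) / b i := by
    intro i h1 h2
    refine img.min'_le _ ?_
    exact Finset.mem_image_of_mem (fun i => -(a i) / b i)
      (Finset.mem_filter.mpr ⟨Finset.mem_univ i, h1, h2⟩)
  -- negative crossings
  set negS : Finset (Fin n) := Finset.univ.filter (fun i => b i ≠ 0 ∧ -(a i) / b i < 0)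
    with hnegS
  set tm : ℝ := if hne : negS.Nonempty then (negS.image (fun i => -(a i) / b i)).max'
      (hne.image _) else -1 with htm
  have htmneg : tm < 0 := by
    rw [htm]
    split
    · next hne =>
      have hmem := Finset.max'_mem (negS.image (fun i => -(a i) / b i)) (hne.image _)
      obtain ⟨j, hjmem, hj⟩ := Finset.mem_image.mp hmem
      rw [← hj]
      exact (Finset.mem_filter.mp hjmem).2.2
    · norm_num
  have htmge : ∀ i, b i ≠ 0 → -(a i) / b i < 0 → -(a i) / b i ≤ tm := by
    intro i h1 h2
    have hne : negS.Nonempty := ⟨i, Finset.mem_filter.mpr ⟨Finset.mem_univ i, h1, h2⟩⟩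
    rw [htm, dif_pos hne]
    refine Finset.le_max' _ _ ?_
    exact Finset.mem_image_of_mem (fun i => -(a i) / b i)
      (Finset.mem_filter.mpr ⟨Finset.mem_univ i, h1, h2⟩)
  -- signs
  set s : Fin n → ℝ := fun i => if a i < 0 then -1 else 1 with hs
  -- key sign stability
  have key : ∀ t ∈ Set.Icc tm ε, ∀ i, |a i + t * b i| = s i * (a i + t * b i) := by
    rintro t ⟨ht1, ht2⟩ i
    by_cases hbi : b i = 0
    · by_cases hai : a i < 0
      · simp only [hs, if_pos hai, hbi, mul_zero, add_zero]
        rw [abs_of_neg hai]; ring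
      · push_neg at hai
        simp only [hs, if_neg (not_lt.mpr hai), hbi, mul_zero, add_zero]
        rw [abs_of_nonneg hai]; ring
    · have hai : a i ≠ 0 := hab i hbi
      have hcz : a i + (-(a i) / b i) * b i = 0 := by field_simp; ring
      have hnonneg : 0 ≤ s i * (a i + t * b i) := by
        rcases lt_or_gt_of_ne hai with haneg | hapos
        · -- a i < 0
          simp only [hs, if_pos haneg]
          rcases lt_or_gt_of_ne hbi with hbneg | hbpos
          · -- b < 0 : crossing = -a/b < 0
            have hcneg : -(a i) / b i < 0 := div_neg_of_pos_of_neg (by linarith) hbneg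
            have := htmge i hbi hcneg
            nlinarith
          · -- b > 0 : crossing > 0
            have hcpos : 0 < -(a i) / b i := div_pos (by linarith) hbpos
            have := hεle i hbi hcpos
            nlinarith
        · simp only [hs, if_neg (not_lt.mpr (le_of_lt hapos))]
          rcases lt_or_gt_of_ne hbi with hbneg | hbpos
          · have hcpos : 0 < -(a i) / b i := div_pos_of_neg_of_neg (by linarith) hbneg
            have := hεle i hbi hcpos
            nlinarith
          · have hcneg : -(a i) / b i < 0 := div_neg_of_neg_of_pos (by linarith) hbpos
            have := htmge i hbi hcneg
            nlinarith
      rcases lt_or_gt_of_ne hai with haneg | hapos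
      · have : s i = -1 := by simp [hs, haneg]
        rw [this] at hnonneg ⊢
        have : a i + t * b i ≤ 0 := by nlinarith
        rw [abs_of_nonpos this]; ring
      · have : s i = 1 := by simp [hs, not_lt.mpr (le_of_lt hapos)]
        rw [this] at hnonneg ⊢
        rw [one_mul] at hnonneg
        rw [abs_of_nonneg hnonneg]; ring
  have hmemIcc : ∀ t, t ∈ Set.Icc tm ε → Af x (p + t • q) = ∑ i, s i * (a i + t * b i) := by
    intro t ht
    unfold Af
    refine Finset.sum_congr rfl fun i _ => ?_
    rw [ev_line]
    exact key t ht i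
  -- interpolation coefficients
  have hden : 0 < ε - tm := by linarith
  set lam : ℝ := ε / (ε - tm) with hlam
  set mu : ℝ := -tm / (ε - tm) with hmu
  have hlampos : 0 < lam := div_pos hεpos hden
  have hmupos : 0 < mu := div_pos (by linarith) hden
  have hsum1 : lam + mu = 1 := by rw [hlam, hmu]; field_simp; ring
  have hsum0 : lam * tm + mu * ε = 0 := by rw [hlam, hmu]; field_simp; ring
  -- seminorm convexity along the segment
  set N : ℝ → ℝ := fun t => ν (p.1 + t • q.1) with hN
  have hconv : ν p.1 ≤ lam * N tm + mu * N ε := by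
    have hcomb : lam • (p.1 + tm • q.1) + mu • (p.1 + ε • q.1) = p.1 := by
      rw [smul_add, smul_add, smul_smul, smul_smul]
      calc lam • p.1 + (lam * tm) • q.1 + (mu • p.1 + (mu * ε) • q.1)
          = (lam + mu) • p.1 + (lam * tm + mu * ε) • q.1 := by
            rw [add_smul, add_smul]; abel
        _ = p.1 := by rw [hsum1, hsum0, one_smul, zero_smul, add_zero]
    calc ν p.1 = ν (lam • (p.1 + tm • q.1) + mu • (p.1 + ε • q.1)) := by rw [hcomb]
      _ ≤ ν (lam • (p.1 + tm • q.1)) + ν (mu • (p.1 + ε • q.1)) := map_add_le_add ν _ _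
      _ = lam * N tm + mu * N ε := by
          rw [map_smul_eq_mul, map_smul_eq_mul, Real.norm_eq_abs,
            abs_of_pos hlampos, Real.norm_eq_abs, abs_of_pos hmupos]
  -- optimality at the endpoints
  have hopt_tm : m * N tm ≤ ∑ i, s i * (a i + tm * b i) := by
    rw [← hmemIcc tm ⟨le_refl tm, by linarith⟩]
    exact hopt (p + tm • q) (hline tm)
  have hopt_ε : m * N ε ≤ ∑ i, s i * (a i + ε * b i) := by
    rw [← hmemIcc ε ⟨by linarith, le_refl ε⟩]
    exact hopt (p + ε • q) (hline ε)
  -- the affine combination of the objective values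
  have hΛ : lam * (∑ i, s i * (a i + tm * b i)) + mu * (∑ i, s i * (a i + ε * b i))
      = Af x p := by
    have h0 : Af x p = ∑ i, s i * (a i + 0 * b i) := by
      have := hmemIcc 0 ⟨le_of_lt htmneg, le_of_lt hεpos⟩
      simpa using this
    rw [h0, Finset.mul_sum, Finset.mul_sum, ← Finset.sum_add_distrib]
    refine Finset.sum_congr rfl fun i _ => ?_
    have e1 : lam * (s i * (a i + tm * b i)) + mu * (s i * (a i + ε * b i))
        = s i * ((lam + mu) * a i + (lam * tm + mu * ε) * b i) := by ring
    rw [e1, hsum1, hsum0]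
    ring
  -- squeeze
  have hsqueeze : ∑ i, s i * (a i + ε * b i) = m * N ε := by
    have h1 : m * ν p.1 ≤ m * (lam * N tm + mu * N ε) :=
      mul_le_mul_of_nonneg_left hconv hm
    have h2 : lam * (m * N tm) ≤ lam * (∑ i, s i * (a i + tm * b i)) :=
      mul_le_mul_of_nonneg_left hopt_tm (le_of_lt hlampos)
    have h3 : mu * (m * N ε) ≤ mu * (∑ i, s i * (a i + ε * b i)) :=
      mul_le_mul_of_nonneg_left hopt_ε (le_of_lt hmupos)
    nlinarith [hΛ, hAp, h1, h2, h3]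
  refine ⟨ε, i₀, hεpos, hbi₀, ?_, ?_⟩
  · rw [ev_line]
    show a i₀ + ε * b i₀ = 0
    rw [← hi₀]
    field_simp
    ring
  · have : (p + ε • q).1 = p.1 + ε • q.1 := rfl
    rw [hmemIcc ε ⟨by linarith, le_refl ε⟩, hsqueeze, this]


open Finset Module Submodule

variable {n d : ℕ}

lemma improve (hd : 1 ≤ d) (hn : d ≤ n) (x : Fin n → Fin d → ℝ)
    (ν : Seminorm ℝ (Fin d → ℝ)) (hν : ∀ β : Fin d → ℝ, β ≠ 0 → 0 < ν β)
    (hdim : d - 1 ≤ Module.finrank ℝ (affineSpan ℝ (Set.range x)).direction)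
    (m : ℝ) (hm : 0 ≤ m)
    (hopt : ∀ r : (Fin d → ℝ) × ℝ, r.1 ≠ 0 → m * ν r.1 ≤ Af x r)
    (p : (Fin d → ℝ) × ℝ) (hp1 : p.1 ≠ 0) (hAp : Af x p = m * ν p.1)
    (hr : finrank ℝ (Zspan x p) < d) :
    ∃ p' : (Fin d → ℝ) × ℝ, p'.1 ≠ 0 ∧ Af x p' = m * ν p'.1 ∧
      finrank ℝ (Zspan x p) < finrank ℝ (Zspan x p') := by
  classical
  have hfull : ∀ p'' : (Fin d → ℝ) × ℝ, (∀ i, ev x i p'' = 0) →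
      d ≤ finrank ℝ (Zspan x p'') := by
    intro p'' hall
    have hset : {i : Fin n | ev x i p'' = 0} = Set.univ := by
      ext i; simp [hall i]
    have heq : Zspan x p'' = Submodule.span ℝ (Set.range (vv x)) := by
      unfold Zspan
      rw [hset, Set.image_univ]
    rw [heq]
    exact caseA hd hn x hdim
  by_cases hall : ∀ i, ev x i p = 0
  · exact absurd (lt_of_lt_of_le hr (hfull p hall)) (lt_irrefl _)
  push_neg at hall
  obtain ⟨i₁, hi₁⟩ := hall
  -- finishing move from a good direction with a positive crossing
  have hfinish : ∀ q : (Fin d → ℝ) × ℝ, (∀ i, ev x i p = 0 → ev x i q = 0) →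
      (∀ t : ℝ, p.1 + t • q.1 ≠ 0) →
      (∃ i, ev x i q ≠ 0 ∧ 0 < -(ev x i p) / ev x i q) →
      ∃ p' : (Fin d → ℝ) × ℝ, p'.1 ≠ 0 ∧ Af x p' = m * ν p'.1 ∧
        finrank ℝ (Zspan x p) < finrank ℝ (Zspan x p') := by
    intro q hq0 hline hex
    obtain ⟨t, i₀, htpos, hbi₀, hev0, hAf⟩ := step x ν m hm hopt p q hAp hq0 hline hex
    refine ⟨p + t • q, hline t, hAf, ?_⟩
    have hZsub : Zspan x p ≤ Zspan x (p + t • q) := by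
      unfold Zspan
      apply Submodule.span_mono
      apply Set.image_mono
      intro i hi
      simp only [Set.mem_setOf_eq] at hi ⊢
      rw [ev_line, hi, hq0 i hi]
      ring
    have hmem : vv x i₀ ∈ Zspan x (p + t • q) := Submodule.subset_span ⟨i₀, hev0, rfl⟩
    have hnotmem : vv x i₀ ∉ Zspan x p := by
      intro hcontra
      have hker : Zspan x p ≤ LinearMap.ker (toDualMap d q) := by
        unfold Zspan
        rw [Submodule.span_le]
        rintro _ ⟨i, hi, rfl⟩
        rw [SetLike.mem_coe, LinearMap.mem_ker, toDualMap_vv]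
        exact hq0 i hi
      have := hker hcontra
      rw [LinearMap.mem_ker, toDualMap_vv] at this
      exact hbi₀ this
    have hlt : Zspan x p < Zspan x (p + t • q) :=
      lt_of_le_of_ne hZsub (fun h => hnotmem (h ▸ hmem))
    exact Submodule.finrank_lt_finrank_of_lt hlt
  -- sign normalization
  have hsign : ∀ q : (Fin d → ℝ) × ℝ, (∀ i, ev x i p = 0 → ev x i q = 0) →
      (∀ t : ℝ, p.1 + t • q.1 ≠ 0) → (∃ i, ev x i q ≠ 0) →
      ∃ p' : (Fin d → ℝ) × ℝ, p'.1 ≠ 0 ∧ Af x p' = m * ν p'.1 ∧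
        finrank ℝ (Zspan x p) < finrank ℝ (Zspan x p') := by
    rintro q hq0 hline ⟨i₂, hbi₂⟩
    have hai₂ : ev x i₂ p ≠ 0 := fun h => hbi₂ (hq0 i₂ h)
    have hcne : -(ev x i₂ p) / ev x i₂ q ≠ 0 :=
      div_ne_zero (neg_ne_zero.mpr hai₂) hbi₂
    rcases lt_or_gt_of_ne hcne with hneg | hpos
    · -- use -q
      apply hfinish (-q)
      · intro i hi
        rw [map_neg, hq0 i hi, neg_zero]
      · intro t
        have heq : p.1 + t • (-q).1 = p.1 + (-t) • q.1 := by
          show p.1 + t • (-q.1) = p.1 + (-t) • q.1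
          rw [smul_neg, neg_smul]
        rw [heq]
        exact hline (-t)
      · refine ⟨i₂, ?_, ?_⟩
        · rw [map_neg]
          exact neg_ne_zero.mpr hbi₂
        · rw [map_neg, div_neg, neg_div]
          rw [neg_div] at hneg
          linarith
    · exact hfinish q hq0 hline ⟨i₂, hbi₂, hpos⟩
  by_cases hZ : ∃ iz, ev x iz p = 0
  · obtain ⟨iz, hiz⟩ := hZ
    have hpne : p ≠ 0 := fun h => hp1 (by rw [h]; rfl)
    obtain ⟨q, hq0, hqns⟩ := exists_q x p hpne hr
    by_cases hb : ∀ i, ev x i q = 0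
    · -- all points lie on the q-hyperplane
      have hq1 : q.1 ≠ 0 := by
        intro h
        have h2 : q.2 = 0 := by
          have := hb iz
          rw [ev_apply, h] at this
          simpa using this
        apply hqns
        have : q = 0 := Prod.ext h h2
        rw [this]
        exact Submodule.zero_mem _
      have hAq : Af x q = 0 := by
        unfold Af
        exact Finset.sum_eq_zero fun i _ => by rw [hb i, abs_zero]
      have hm0 : m = 0 := by
        have h1 := hopt q hq1
        have h2 := hν q.1 hq1
        nlinarith [hAq]
      refine ⟨q, hq1, by rw [hAq, hm0, zero_mul], ?_⟩
      exact lt_of_lt_of_le hr (hfull q hb)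
    · push_neg at hb
      have hline : ∀ t : ℝ, p.1 + t • q.1 ≠ 0 := by
        intro t hcontra
        by_cases ht : t = 0
        · rw [ht, zero_smul, add_zero] at hcontra
          exact hp1 hcontra
        · set w : (Fin d → ℝ) × ℝ := q + t⁻¹ • p with hwdef
          have hw1 : w.1 = 0 := by
            show q.1 + t⁻¹ • p.1 = 0
            have hp1eq : p.1 = -(t • q.1) := eq_neg_of_add_eq_zero_left hcontra
            rw [hp1eq, smul_neg, smul_smul, inv_mul_cancel₀ ht, one_smul]
            exact add_neg_cancel q.1
          have hevw : ev x iz w = 0 := by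
            rw [map_add, map_smul, hq0 iz hiz, hiz]
            simp
          have hw2 : w.2 = 0 := by
            rw [ev_apply] at hevw
            have hsum : ∑ ℓ, w.1 ℓ * x iz ℓ = 0 := by
              rw [hw1]
              simp
            linarith
          have hwzero : w = 0 := Prod.ext hw1 hw2
          apply hqns
          have hq : q = -(t⁻¹ • p) := eq_neg_of_add_eq_zero_left hwzero
          rw [hq]
          exact Submodule.neg_mem _ (Submodule.smul_mem _ _
            (Submodule.mem_span_singleton_self p))
      exact hsign q hq0 hline hb
  · push_neg at hZ
    apply hsign ((0 : Fin d → ℝ), (1:ℝ))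
    · intro i hi
      exact absurd hi (hZ i)
    · intro t
      show p.1 + t • (0 : Fin d → ℝ) ≠ 0
      rw [smul_zero, add_zero]
      exact hp1
    · refine ⟨i₁, ?_⟩
      rw [ev_apply]
      simp


open Finset Module Submodule

variable {n d : ℕ}

lemma extract (x : Fin n → Fin d → ℝ) (p : (Fin d → ℝ) × ℝ)
    (hge : d ≤ finrank ℝ (Zspan x p)) :
    ∃ idx : Fin d → Fin n, (∀ k, ev x (idx k) p = 0) ∧
      AffineIndependent ℝ (fun k => x (idx k)) := by
  classical
  set S : Set ((Fin d → ℝ) × ℝ) := vv x '' {i | ev x i p = 0} with hS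
  obtain ⟨b, hbS, hbspan, hbind⟩ := exists_linearIndependent ℝ S
  have hbfin : b.Finite := Set.Finite.subset (Set.Finite.image _ (Set.toFinite _)) hbS
  haveI : Fintype b := hbfin.fintype
  have hcard : finrank ℝ (span ℝ b) = b.toFinset.card :=
    finrank_span_set_eq_card hbind
  have hdle : d ≤ b.toFinset.card := by
    have : span ℝ b = Zspan x p := by rw [hbspan]; rfl
    rw [← hcard, this]
    exact hge
  obtain ⟨c, hcb, hccard⟩ := Finset.exists_subset_card_eq hdle
  have e : (↥c) ≃ Fin d := Fintype.equivFinOfCardEq (by rw [Fintype.card_coe]; exact hccard)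
  set w : Fin d → (Fin d → ℝ) × ℝ := fun k => ((e.symm k : ↥c) : (Fin d → ℝ) × ℝ) with hw
  have hwb : ∀ k, w k ∈ b := by
    intro k
    have := (e.symm k).2
    have := hcb this
    rwa [Set.mem_toFinset] at this
  have hwind : LinearIndependent ℝ w := by
    set f : Fin d → b := fun k => ⟨w k, hwb k⟩ with hf
    have hfinj : Function.Injective f := by
      intro k k' hkk'
      have h1 : w k = w k' := congrArg (Subtype.val : b → ((Fin d → ℝ) × ℝ)) hkk'
      have h2 : (e.symm k : ↥c) = (e.symm k' : ↥c) := Subtype.ext h1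
      have := congrArg e h2
      simpa using this
    have := hbind.comp f hfinj
    exact this
  have hwS : ∀ k, w k ∈ S := fun k => hbS (hwb k)
  have hchoice : ∀ k : Fin d, ∃ i : Fin n, ev x i p = 0 ∧ vv x i = w k := by
    intro k
    obtain ⟨i, hi1, hi2⟩ := hwS k
    exact ⟨i, hi1, hi2⟩
  choose idx hidx1 hidx2 using hchoice
  refine ⟨idx, hidx1, ?_⟩
  rw [affineIndependent_iff_of_fintype]
  intro u hu hvsub
  have hlin := Finset.univ.weightedVSub_eq_linear_combination
    (p := fun k => x (idx k)) (w := u) hu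
  rw [hlin] at hvsub
  have hzero : ∑ k, u k • w k = 0 := by
    have hfst : (∑ k, u k • w k).1 = ∑ k, u k • (w k).1 := by
      rw [Prod.fst_sum]
      exact Finset.sum_congr rfl fun k _ => rfl
    have hsnd : (∑ k, u k • w k).2 = ∑ k, u k • (w k).2 := by
      rw [Prod.snd_sum]
      exact Finset.sum_congr rfl fun k _ => rfl
    have hw1 : ∀ k, (w k).1 = x (idx k) := fun k => by rw [← hidx2 k]; rfl
    have hw2 : ∀ k, (w k).2 = 1 := fun k => by rw [← hidx2 k]; rfl
    have h1 : (∑ k, u k • w k).1 = 0 := by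
      rw [hfst]
      calc ∑ k, u k • (w k).1 = ∑ k, u k • x (idx k) := by
            exact Finset.sum_congr rfl fun k _ => by rw [hw1 k]
        _ = 0 := hvsub
    have h2 : (∑ k, u k • w k).2 = 0 := by
      rw [hsnd]
      calc ∑ k, u k • (w k).2 = ∑ k, u k := by
            refine Finset.sum_congr rfl fun k _ => by rw [hw2 k]; simp
        _ = 0 := hu
    exact Prod.ext h1 h2
  exact fun k => Fintype.linearIndependent_iff.mp hwind u hzero k


end Stmt16

namespace Stmt16
open Finset Module Submodule

variable {n d : ℕ}

lemma reach (hd : 1 ≤ d) (hn : d ≤ n) (x : Fin n → Fin d → ℝ)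
    (ν : Seminorm ℝ (Fin d → ℝ)) (hν : ∀ β : Fin d → ℝ, β ≠ 0 → 0 < ν β)
    (hdim : d - 1 ≤ Module.finrank ℝ (affineSpan ℝ (Set.range x)).direction)
    (m : ℝ) (hm : 0 ≤ m)
    (hopt : ∀ r : (Fin d → ℝ) × ℝ, r.1 ≠ 0 → m * ν r.1 ≤ Af x r) :
    ∀ (k : ℕ) (p : (Fin d → ℝ) × ℝ), p.1 ≠ 0 → Af x p = m * ν p.1 →
      d ≤ k + finrank ℝ (Zspan x p) →
      ∃ p' : (Fin d → ℝ) × ℝ, p'.1 ≠ 0 ∧ Af x p' = m * ν p'.1 ∧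
        d ≤ finrank ℝ (Zspan x p') := by
  intro k
  induction k with
  | zero =>
    intro p h1 h2 h3
    exact ⟨p, h1, h2, by simpa using h3⟩
  | succ k ih =>
    intro p h1 h2 h3
    by_cases hge : d ≤ finrank ℝ (Zspan x p)
    · exact ⟨p, h1, h2, hge⟩
    · push_neg at hge
      obtain ⟨p', h1', h2', hlt⟩ := improve hd hn x ν hν hdim m hm hopt p h1 h2 hge
      exact ih p' h1' h2' (by omega)

end Stmt16




/-- Weak incidence property: if the `n` data points affinely span a space of dimension
at least `d − 1`, there exists an optimal median hyperplane (minimizing the sum of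
norm-based residuals `|βᵀxᵢ + α| / ν(β)`) passing through `d` affinely independent
data points. -/
theorem stmt16 {n d : ℕ} (hd : 1 ≤ d) (hn : d ≤ n)
    (x : Fin n → Fin d → ℝ)
    (ν : Seminorm ℝ (Fin d → ℝ)) (hν : ∀ β : Fin d → ℝ, β ≠ 0 → 0 < ν β)
    (hdim : d - 1 ≤ Module.finrank ℝ (affineSpan ℝ (Set.range x)).direction) :
    ∃ (βs : Fin d → ℝ) (αs : ℝ), βs ≠ 0 ∧
      (∀ (β : Fin d → ℝ) (α : ℝ), β ≠ 0 →
        (∑ i : Fin n, |(∑ ℓ : Fin d, βs ℓ * x i ℓ) + αs| / ν βs) ≤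
          ∑ i : Fin n, |(∑ ℓ : Fin d, β ℓ * x i ℓ) + α| / ν β) ∧
      ∃ idx : Fin d → Fin n,
        (∀ k : Fin d, (∑ ℓ : Fin d, βs ℓ * x (idx k) ℓ) + αs = 0) ∧
        AffineIndependent ℝ (fun k => x (idx k)) := by

  classical
  obtain ⟨m, p0, hm, hp01, hAp0, hopt⟩ := Stmt16.exists_min hd (le_trans hd hn) x ν hν
  obtain ⟨p, hp1, hAp, hge⟩ := Stmt16.reach hd hn x ν hν hdim m hm hopt d p0 hp01 hAp0
    (by omega)
  obtain ⟨idx, hidx0, hidxaff⟩ := Stmt16.extract x p hge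
  have hνp : 0 < ν p.1 := hν _ hp1
  refine ⟨p.1, p.2, hp1, ?_, idx, ?_, hidxaff⟩
  · intro β α hβ
    have hνβ : 0 < ν β := hν _ hβ
    calc ∑ i : Fin n, |(∑ ℓ : Fin d, p.1 ℓ * x i ℓ) + p.2| / ν p.1
        = Stmt16.Af x p / ν p.1 := by
          rw [Stmt16.Af, Finset.sum_div]
          exact Finset.sum_congr rfl fun i _ => by rw [Stmt16.ev_apply]
      _ = m := by
          rw [hAp]
          field_simp
      _ ≤ Stmt16.Af x (β, α) / ν β := by
          rw [le_div_iff₀ hνβ]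
          exact hopt (β, α) hβ
      _ = ∑ i : Fin n, |(∑ ℓ : Fin d, β ℓ * x i ℓ) + α| / ν β := by
          rw [Stmt16.Af, Finset.sum_div]
          exact Finset.sum_congr rfl fun i _ => by rw [Stmt16.ev_apply]
  · intro k
    have := hidx0 k
    rw [Stmt16.ev_apply] at this
    exact this
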